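/- Given any positive increasing function F, there exists an irrational \alpha whose continued fraction convergents p_n/q_n include infinitely many with q_n odd and |\alpha - p_n/q_n| < 1/F(q_n), and with F(q_n) \le a_{n+1} q_n^2 where a_{n+1} is the (n+1)-st partial quotient. -/

import Mathlib

open Filter
open Filter

noncomputable def cfA (F : ℝ → ℝ) (x : ℤ) : ℤ := max 1 ⌈F (x : ℝ)⌉

noncomputable def cfQaux (F : ℝ → ℝ) : ℕ → ℤ × ℤ
  | 0 => (1, cfA F 1)
  | n+1 => ((cfQaux F n).2, cfA F (cfQaux F n).2 * (cfQaux F n).2 + (cfQaux F n).1)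

noncomputable def cfq (F : ℝ → ℝ) (n : ℕ) : ℤ := (cfQaux F n).1

noncomputable def cfa (F : ℝ → ℝ) : ℕ → ℤ
  | 0 => 0
  | n+1 => cfA F (cfq F n)

noncomputable def cfPaux (F : ℝ → ℝ) : ℕ → ℤ × ℤ
  | 0 => (0, 1)
  | n+1 => ((cfPaux F n).2, cfa F (n+2) * (cfPaux F n).2 + (cfPaux F n).1)

noncomputable def cfp (F : ℝ → ℝ) (n : ℕ) : ℤ := (cfPaux F n).1

variable (F : ℝ → ℝ)

lemma cfq_zero : cfq F 0 = 1 := rfl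
lemma cfq_succ (n : ℕ) : cfq F (n+1) = (cfQaux F n).2 := rfl
lemma cfq_one : cfq F 1 = cfa F 1 := rfl
lemma cfq_rec (n : ℕ) : cfq F (n+2) = cfa F (n+2) * cfq F (n+1) + cfq F n := rfl
lemma cfp_zero : cfp F 0 = 0 := rfl
lemma cfp_one : cfp F 1 = 1 := rfl
lemma cfp_rec (n : ℕ) : cfp F (n+2) = cfa F (n+2) * cfp F (n+1) + cfp F n := rfl

lemma cfA_ge_one (x : ℤ) : 1 ≤ cfA F x := le_max_left _ _
lemma cfA_ge_F (x : ℤ) : F (x : ℝ) ≤ (cfA F x : ℝ) := by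
  refine le_trans (Int.le_ceil _) ?_
  exact_mod_cast le_max_right 1 ⌈F (x:ℝ)⌉

lemma cfa_pos : ∀ k, 1 ≤ k → 1 ≤ cfa F k := by
  rintro (_|k) h
  · omega
  · exact cfA_ge_one F _

lemma cfq_pos : ∀ n, 1 ≤ cfq F n := by
  have h : ∀ n, 1 ≤ cfq F n ∧ 1 ≤ cfq F (n+1) := by
    intro n
    induction n with
    | zero => exact ⟨le_refl _, cfA_ge_one F _⟩
    | succ n ih =>
      refine ⟨ih.2, ?_⟩
      rw [cfq_rec]
      have h1 := cfa_pos F (n+2) (by omega)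
      nlinarith [ih.1, ih.2]
  exact fun n => (h n).1

lemma cfq_step (n : ℕ) : cfq F (n+1) + cfq F n ≤ cfq F (n+2) := by
  rw [cfq_rec]
  have h1 := cfa_pos F (n+2) (by omega)
  nlinarith [cfq_pos F (n+1)]

lemma cfq_mono (n : ℕ) : cfq F n ≤ cfq F (n+1) := by
  cases n with
  | zero => exact cfA_ge_one F _
  | succ n =>
    show cfq F (n+1) ≤ cfq F (n+2)
    have := cfq_step F n; have := cfq_pos F n; omega

lemma cfq_ge (n : ℕ) : (n : ℤ) ≤ cfq F n := by
  induction n with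
  | zero => norm_num [cfq_zero]
  | succ n ih =>
    cases n with
    | zero => have h1 : (1:ℤ) ≤ cfq F 1 := cfA_ge_one F 1; simpa using h1
    | succ m =>
      show ((m:ℤ)+1+1) ≤ cfq F (m+2)
      have := cfq_step F m
      have := cfq_pos F m
      have : ((m:ℤ)+1) ≤ cfq F (m+1) := by exact_mod_cast ih
      omega

lemma cfdet (n : ℕ) : cfp F (n+1) * cfq F n - cfp F n * cfq F (n+1) = (-1)^n := by
  induction n with
  | zero => simp [cfp_one, cfp_zero, cfq_zero]
  | succ n ih =>
    rw [cfp_rec, cfq_rec, pow_succ]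
    linear_combination (-1 : ℤ) * ih

lemma cfq_mul_a (n : ℕ) : cfa F (n+1) * cfq F n ≤ cfq F (n+1) := by
  cases n with
  | zero => simp [cfq_zero, cfq_one]
  | succ m =>
    show cfa F (m+2) * cfq F (m+1) ≤ cfq F (m+2)
    rw [cfq_rec]
    have := cfq_pos F m
    omega

noncomputable def cfx (F : ℝ → ℝ) (n : ℕ) : ℝ := (cfp F n : ℝ) / (cfq F n : ℝ)

lemma cfq_posR (n : ℕ) : (0:ℝ) < (cfq F n : ℝ) := by
  have := cfq_pos F n; exact_mod_cast lt_of_lt_of_le one_pos this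

lemma cfx_diff (n : ℕ) :
    cfx F (n+1) - cfx F n = (-1)^n / ((cfq F n : ℝ) * (cfq F (n+1) : ℝ)) := by
  have h := cfdet F n
  have h1 := (cfq_posR F n).ne'
  have h2 := (cfq_posR F (n+1)).ne'
  have hR : (cfp F (n+1) : ℝ) * (cfq F n : ℝ) - (cfp F n : ℝ) * (cfq F (n+1) : ℝ)
      = (-1)^n := by exact_mod_cast congrArg (fun z : ℤ => (z : ℝ)) h
  unfold cfx
  field_simp
  linear_combination hR

lemma cfx_even_lt_succ (j : ℕ) : cfx F (2*j) < cfx F (2*j+1) := by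
  have h := cfx_diff F (2*j)
  have hp : (0:ℝ) < (-1:ℝ)^(2*j) / ((cfq F (2*j) : ℝ) * (cfq F (2*j+1) : ℝ)) := by
    rw [Even.neg_one_pow ⟨j, by ring⟩]
    exact div_pos one_pos (mul_pos (cfq_posR F _) (cfq_posR F _))
  linarith [h, hp]

lemma cfq_two_step (n : ℕ) : (cfq F n : ℝ) * (cfq F (n+1)) < (cfq F (n+1) : ℝ) * (cfq F (n+2)) := by
  have h1 := cfq_step F n
  have h2 := cfq_pos F n
  have h3 := cfq_pos F (n+1)
  have : cfq F n * cfq F (n+1) < cfq F (n+1) * cfq F (n+2) := by nlinarith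
  exact_mod_cast this

lemma cfx_two_diff (n : ℕ) :
    cfx F (n+2) - cfx F n = (-1)^n * (1 / ((cfq F n : ℝ) * cfq F (n+1)) - 1 / ((cfq F (n+1) : ℝ) * cfq F (n+2))) := by
  have h1 := cfx_diff F n
  have h2 := cfx_diff F (n+1)
  rw [pow_succ] at h2
  have : cfx F (n+2) - cfx F n = (cfx F (n+2) - cfx F (n+1)) + (cfx F (n+1) - cfx F n) := by ring
  rw [this, h1, h2]
  ring

lemma cfx_paren_pos (n : ℕ) :
    (0:ℝ) < 1 / ((cfq F n : ℝ) * cfq F (n+1)) - 1 / ((cfq F (n+1) : ℝ) * cfq F (n+2)) := by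
  have h := cfq_two_step F n
  have p1 : (0:ℝ) < (cfq F n : ℝ) * cfq F (n+1) := mul_pos (cfq_posR F _) (cfq_posR F _)
  have p2 : (0:ℝ) < (cfq F (n+1) : ℝ) * cfq F (n+2) := mul_pos (cfq_posR F _) (cfq_posR F _)
  have := one_div_lt_one_div_of_lt p1 h
  linarith

lemma cfE_strictMono : StrictMono (fun j => cfx F (2*j)) := by
  apply strictMono_nat_of_lt_succ
  intro j
  have h := cfx_two_diff F (2*j)
  rw [Even.neg_one_pow ⟨j, by ring⟩, one_mul] at h
  have hp := cfx_paren_pos F (2*j)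
  have : cfx F (2*(j+1)) = cfx F (2*j+2) := by ring_nf
  rw [this]
  linarith [h, hp]

lemma cfO_strictAnti : StrictAnti (fun j => cfx F (2*j+1)) := by
  apply strictAnti_nat_of_succ_lt
  intro j
  have h := cfx_two_diff F (2*j+1)
  rw [Odd.neg_one_pow ⟨j, by ring⟩] at h
  have hp := cfx_paren_pos F (2*j+1)
  have : cfx F (2*(j+1)+1) = cfx F (2*j+1+2) := by ring_nf
  rw [this]
  linarith [h, hp]

lemma cfE_lt_cfO (k j : ℕ) : cfx F (2*k) < cfx F (2*j+1) := by
  have h1 : cfx F (2*k) ≤ cfx F (2*(max k j)) := (cfE_strictMono F).monotone (le_max_left k j)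
  have h2 : cfx F (2*(max k j)+1) ≤ cfx F (2*j+1) := (cfO_strictAnti F).antitone (le_max_right k j)
  have h3 := cfx_even_lt_succ F (max k j)
  linarith

noncomputable def cfα (F : ℝ → ℝ) : ℝ := ⨆ j, cfx F (2*j)

lemma cfE_bdd : BddAbove (Set.range (fun j => cfx F (2*j))) := by
  refine ⟨cfx F 1, ?_⟩
  rintro x ⟨k, rfl⟩
  have := cfE_lt_cfO F k 0
  simpa using this.le

lemma cfE_lt_α (k : ℕ) : cfx F (2*k) < cfα F := by
  have h1 : cfx F (2*(k+1)) ≤ cfα F := le_ciSup (cfE_bdd F) (k+1)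
  have h2 := (cfE_strictMono F) (Nat.lt_succ_self k)
  linarith

lemma cfα_lt_O (j : ℕ) : cfα F < cfx F (2*j+1) := by
  have h1 : cfα F ≤ cfx F (2*(j+1)+1) := ciSup_le (fun k => (cfE_lt_cfO F k (j+1)).le)
  have h2 := (cfO_strictAnti F) (Nat.lt_succ_self j)
  linarith

lemma cfα_bound (n : ℕ) :
    0 < |cfα F - cfx F n| ∧ |cfα F - cfx F n| < 1 / ((cfq F n : ℝ) * cfq F (n+1)) := by
  rcases Nat.even_or_odd n with ⟨j, hj⟩ | ⟨j, hj⟩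
  · subst hj
    have h1 : cfx F (j+j) < cfα F := by have := cfE_lt_α F j; rwa [two_mul] at this
    have h2 : cfα F < cfx F (j+j+1) := by have := cfα_lt_O F j; rwa [two_mul] at this
    have hd := cfx_diff F (j+j)
    rw [Even.neg_one_pow ⟨j, rfl⟩] at hd
    rw [abs_of_pos (by linarith)]
    constructor <;> linarith
  · subst hj
    have h1 : cfα F < cfx F (2*j+1) := cfα_lt_O F j
    have h2 : cfx F (2*(j+1)) < cfα F := cfE_lt_α F (j+1)
    have h2' : cfx F (2*j+1+1) < cfα F := by
      have : 2*(j+1) = 2*j+1+1 := by ring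
      rwa [this] at h2
    have hd := cfx_diff F (2*j+1)
    rw [Odd.neg_one_pow ⟨j, rfl⟩, neg_div] at hd
    rw [abs_of_neg (by linarith)]
    constructor <;> linarith

lemma cfα_ne (n : ℕ) : cfα F ≠ cfx F n := by
  have := (cfα_bound F n).1
  intro h; rw [h] at this; simp at this

lemma cf_tendsto : Tendsto (fun n => cfx F n) atTop (nhds (cfα F)) := by
  rw [tendsto_iff_dist_tendsto_zero]
  refine squeeze_zero (g := fun n : ℕ => 1 / ((n:ℝ)+1)) (fun n => dist_nonneg)
    (fun n => ?_) tendsto_one_div_add_atTop_nhds_zero_nat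
  have hb := (cfα_bound F n).2
  have h1 : ((n:ℝ)+1) ≤ (cfq F n : ℝ) * cfq F (n+1) := by
    have hq1 := cfq_pos F n
    have hq2 := cfq_ge F (n+1)
    have : ((n:ℤ)+1) ≤ cfq F n * cfq F (n+1) := by push_cast at hq2; nlinarith
    exact_mod_cast this
  have h2 : 1 / ((cfq F n : ℝ) * cfq F (n+1)) ≤ 1 / ((n:ℝ)+1) :=
    one_div_le_one_div_of_le (by positivity) h1
  rw [Real.dist_eq, abs_sub_comm]
  linarith

lemma cf_irrational : Irrational (cfα F) := by
  rw [Irrational]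
  rintro ⟨r, hr⟩
  set n := r.den with hn
  set t : ℤ := r.num * cfq F n - (r.den : ℤ) * cfp F n with ht
  have hdq : (0:ℝ) < (r.den : ℝ) := by exact_mod_cast r.pos
  have hqn := cfq_posR F n
  have hqn1 := cfq_posR F (n+1)
  have hdiff : cfα F - cfx F n = (t : ℝ) / ((r.den : ℝ) * (cfq F n : ℝ)) := by
    rw [← hr, Rat.cast_def, cfx]
    push_cast [ht]
    field_simp
  have htne : t ≠ 0 := by
    intro h0
    apply cfα_ne F n
    have : cfα F - cfx F n = 0 := by rw [hdiff, h0]; simp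
    linarith
  have habs : (1:ℝ) ≤ |(t:ℝ)| := by
    have := Int.one_le_abs htne
    exact_mod_cast this
  have hlow : 1 / ((r.den : ℝ) * (cfq F n : ℝ)) ≤ |cfα F - cfx F n| := by
    rw [hdiff, abs_div, abs_of_pos (mul_pos hdq hqn)]
    gcongr
  have hb := (cfα_bound F n).2
  have h3 : (1:ℝ)/((r.den : ℝ) * cfq F n) < 1/((cfq F n : ℝ) * cfq F (n+1)) :=
    lt_of_le_of_lt hlow hb
  have h4 : (1:ℝ) * ((cfq F n : ℝ) * cfq F (n+1)) < 1 * ((r.den : ℝ) * cfq F n) :=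
    (div_lt_div_iff₀ (mul_pos hdq hqn) (mul_pos hqn hqn1)).1 h3
  have h5 : (cfq F (n+1) : ℝ) < (r.den : ℝ) := by nlinarith
  have h6 : ((n:ℝ)+1) ≤ (cfq F (n+1) : ℝ) := by
    have := cfq_ge F (n+1); push_cast at this; exact_mod_cast this
  have h7 : ((r.den : ℝ)) = (n : ℝ) := by rw [hn]
  linarith

theorem cf_main_aux (F : ℝ → ℝ)
    (hFpos : ∀ x ∈ Set.Ioi (0 : ℝ), 0 < F x)
    (hFmono : StrictMonoOn F (Set.Ioi (0 : ℝ))) :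
    ∃ (α : ℝ) (a p q : ℕ → ℤ),
      Irrational α ∧
      (∀ k, 1 ≤ k → 1 ≤ a k) ∧
      p 0 = a 0 ∧ q 0 = 1 ∧ p 1 = a 1 * a 0 + 1 ∧ q 1 = a 1 ∧
      (∀ k, 1 ≤ k → p (k + 1) = a (k + 1) * p k + p (k - 1)) ∧
      (∀ k, 1 ≤ k → q (k + 1) = a (k + 1) * q k + q (k - 1)) ∧
      Filter.Tendsto (fun n => (p n : ℝ) / (q n : ℝ)) Filter.atTop (nhds α) ∧
      ∀ n₀ : ℕ, ∃ n : ℕ, n₀ ≤ n ∧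
        Odd (q n) ∧
        |α - (p n : ℝ) / (q n : ℝ)| < 1 / F ((q n : ℝ)) ∧
        F ((q n : ℝ)) ≤ (a (n + 1) : ℝ) * (q n : ℝ) ^ 2 := by
  have key : ∀ n : ℕ, |cfα F - cfx F n| < 1 / F ((cfq F n : ℝ)) ∧
      F ((cfq F n : ℝ)) ≤ (cfa F (n+1) : ℝ) * (cfq F n : ℝ) ^ 2 := by
    intro n
    have hqp := cfq_posR F n
    have hqp1 := cfq_posR F (n+1)
    have hq1 : (1:ℝ) ≤ (cfq F n : ℝ) := by exact_mod_cast cfq_pos F n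
    have hFq : 0 < F ((cfq F n : ℝ)) := hFpos _ hqp
    have ha : F ((cfq F n : ℝ)) ≤ (cfa F (n+1) : ℝ) := by
      have : cfa F (n+1) = cfA F (cfq F n) := rfl
      rw [this]; exact cfA_ge_F F _
    have hapos : (0:ℝ) < (cfa F (n+1) : ℝ) := lt_of_lt_of_le hFq ha
    have hQ2 : (1:ℝ) ≤ (cfq F n : ℝ)^2 := by nlinarith
    have h2 : F ((cfq F n : ℝ)) ≤ (cfa F (n+1) : ℝ) * (cfq F n : ℝ) ^ 2 := by
      nlinarith [mul_le_mul_of_nonneg_left hQ2 hapos.le]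
    refine ⟨?_, h2⟩
    have hmul : (cfa F (n+1) : ℝ) * (cfq F n : ℝ) ≤ (cfq F (n+1) : ℝ) := by
      exact_mod_cast cfq_mul_a F n
    have h3 : (cfa F (n+1) : ℝ) * (cfq F n : ℝ)^2 ≤ (cfq F n : ℝ) * (cfq F (n+1) : ℝ) := by
      nlinarith
    have h4 : 1 / ((cfq F n : ℝ) * (cfq F (n+1) : ℝ)) ≤ 1 / F ((cfq F n : ℝ)) :=
      one_div_le_one_div_of_le hFq (by linarith)
    exact lt_of_lt_of_le (cfα_bound F n).2 h4
  refine ⟨cfα F, cfa F, cfp F, cfq F, cf_irrational F, cfa_pos F, rfl, rfl, ?_, rfl, ?_, ?_,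
    cf_tendsto F, ?_⟩
  · have h0 : cfa F 0 = 0 := rfl
    rw [cfp_one, h0]; ring
  · intro k hk
    cases k with
    | zero => omega
    | succ m => simpa using cfp_rec F m
  · intro k hk
    cases k with
    | zero => omega
    | succ m => simpa using cfq_rec F m
  · intro n₀
    by_cases h : Odd (cfq F n₀)
    · exact ⟨n₀, le_refl _, h, (key n₀).1, (key n₀).2⟩
    · refine ⟨n₀ + 1, by omega, ?_, (key (n₀+1)).1, (key (n₀+1)).2⟩
      rw [Int.not_odd_iff_even] at h
      by_contra h2
      rw [Int.not_odd_iff_even] at h2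
      have hdet := cfdet F n₀
      have he : Even (cfp F (n₀+1) * cfq F n₀ - cfp F n₀ * cfq F (n₀+1)) :=
        (h.mul_left _).sub (h2.mul_left _)
      rw [hdet] at he
      exact (Int.not_odd_iff_even.mpr he) (Odd.pow ⟨-1, by ring⟩)



/-- Given a positive increasing function `F`, there is an
irrational `α`, given by a continued fraction `[a₀; a₁, a₂, …]` with convergents
`pₙ/qₙ` (defined by the standard recursion and converging to `α`), with
infinitely many `n` such that `qₙ` is odd, `|α - pₙ/qₙ| < 1/F(qₙ)` and
`F(qₙ) ≤ a_{n+1} qₙ²`. -/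
theorem exists_irrational_good_approximants (F : ℝ → ℝ)
    (hFpos : ∀ x ∈ Set.Ioi (0 : ℝ), 0 < F x)
    (hFmono : StrictMonoOn F (Set.Ioi (0 : ℝ))) :
    ∃ (α : ℝ) (a p q : ℕ → ℤ),
      Irrational α ∧
      (∀ k, 1 ≤ k → 1 ≤ a k) ∧
      p 0 = a 0 ∧ q 0 = 1 ∧ p 1 = a 1 * a 0 + 1 ∧ q 1 = a 1 ∧
      (∀ k, 1 ≤ k → p (k + 1) = a (k + 1) * p k + p (k - 1)) ∧
      (∀ k, 1 ≤ k → q (k + 1) = a (k + 1) * q k + q (k - 1)) ∧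
      Filter.Tendsto (fun n => (p n : ℝ) / (q n : ℝ)) Filter.atTop (nhds α) ∧
      ∀ n₀ : ℕ, ∃ n : ℕ, n₀ ≤ n ∧
        Odd (q n) ∧
        |α - (p n : ℝ) / (q n : ℝ)| < 1 / F ((q n : ℝ)) ∧
        F ((q n : ℝ)) ≤ (a (n + 1) : ℝ) * (q n : ℝ) ^ 2 := by
  exact cf_main_aux F hFpos hFmono
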